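/- For all real numbers u_pt, u_x, u_x2, u_x3, u_x4, u_x5, u_x6, the degree-6 polynomial P(x) = u_pt + u_x·L₁(x) + u_x2·L₂(x) + u_x3·L₃(x) + u_x4·L₄(x) + u_x5·L₅(x) + u_x6·L₆(x) has smoothness indicator β(P) = (u_x + u_x3/10 + u_x5/126)² + (13/3)·(u_x2 + (123/455)·u_x4 + (85/2002)·u_x6)² + (781/20)·(u_x3 + (26045/49203)·u_x5)² + (1421461/2275)·(u_x4 + (81596225/93816426)·u_x6)² + (21520059541/1377684)·(u_x5)² + (15510384942580921/27582029244)·(u_x6)². -/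

import Mathlib

open Polynomial

/-- Legendre polynomial `L₁` shifted to `[−1/2, 1/2]`, as a real polynomial. -/
noncomputable def L1 : ℝ[X] := X

/-- Legendre polynomial `L₂` shifted to `[−1/2, 1/2]`, as a real polynomial. -/
noncomputable def L2 : ℝ[X] := X ^ 2 - C (1 / 12)

/-- Legendre polynomial `L₃` shifted to `[−1/2, 1/2]`, as a real polynomial. -/
noncomputable def L3 : ℝ[X] := X ^ 3 - C (3 / 20) * X

/-- Legendre polynomial `L₄` shifted to `[−1/2, 1/2]`, as a real polynomial. -/
noncomputable def L4 : ℝ[X] := X ^ 4 - C (3 / 14) * X ^ 2 + C (3 / 560)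

/-- Legendre polynomial `L₅` shifted to `[−1/2, 1/2]`, as a real polynomial. -/
noncomputable def L5 : ℝ[X] := X ^ 5 - C (5 / 18) * X ^ 3 + C (5 / 336) * X

/-- Legendre polynomial `L₆` shifted to `[−1/2, 1/2]`, as a real polynomial. -/
noncomputable def L6 : ℝ[X] :=
  X ^ 6 - C (15 / 44) * X ^ 4 + C (5 / 176) * X ^ 2 - C (5 / 14784)

/-- The Jiang–Shu smoothness indicator of a real polynomial on the unit zone `[−1/2, 1/2]`:
`β(P) = Σ_{l=1}^{deg P} ∫_{−1/2}^{1/2} (P⁽ˡ⁾(x))² dx`. -/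
noncomputable def beta (P : ℝ[X]) : ℝ :=
  ∑ l ∈ Finset.Icc 1 P.natDegree,
    ∫ x in (-(1 : ℝ) / 2)..(1 / 2), ((derivative^[l] P).eval x) ^ 2

lemma master (c0 c1 c2 c3 c4 c5 : ℝ) :
    ∫ x in (-(1:ℝ)/2)..(1/2), (c0 + c1*x + c2*x^2 + c3*x^3 + c4*x^4 + c5*x^5)^2
      = c0^2 + c0*c2/6 + c0*c4/40 + c1^2/12 + c1*c3/40 + c1*c5/224 + c2^2/80
        + c2*c4/224 + c3^2/448 + c3*c5/1152 + c4^2/2304 + c5^2/11264 := by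
  have hF : ∀ x : ℝ, HasDerivAt (fun x : ℝ => (c0*c0)/1 * x^1 + (c0*c1 + c1*c0)/2 * x^2 + (c0*c2 + c1*c1 + c2*c0)/3 * x^3 + (c0*c3 + c1*c2 + c2*c1 + c3*c0)/4 * x^4 + (c0*c4 + c1*c3 + c2*c2 + c3*c1 + c4*c0)/5 * x^5 + (c0*c5 + c1*c4 + c2*c3 + c3*c2 + c4*c1 + c5*c0)/6 * x^6 + (c1*c5 + c2*c4 + c3*c3 + c4*c2 + c5*c1)/7 * x^7 + (c2*c5 + c3*c4 + c4*c3 + c5*c2)/8 * x^8 + (c3*c5 + c4*c4 + c5*c3)/9 * x^9 + (c4*c5 + c5*c4)/10 * x^10 + (c5*c5)/11 * x^11)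
      ((c0 + c1*x + c2*x^2 + c3*x^3 + c4*x^4 + c5*x^5)^2) x := by
    intro x
    have h := ((((((((((((hasDerivAt_pow 1 x).const_mul ((c0*c0)/1)).add
      ((hasDerivAt_pow 2 x).const_mul ((c0*c1 + c1*c0)/2))).add
      ((hasDerivAt_pow 3 x).const_mul ((c0*c2 + c1*c1 + c2*c0)/3))).add
      ((hasDerivAt_pow 4 x).const_mul ((c0*c3 + c1*c2 + c2*c1 + c3*c0)/4))).add
      ((hasDerivAt_pow 5 x).const_mul ((c0*c4 + c1*c3 + c2*c2 + c3*c1 + c4*c0)/5))).add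
      ((hasDerivAt_pow 6 x).const_mul ((c0*c5 + c1*c4 + c2*c3 + c3*c2 + c4*c1 + c5*c0)/6))).add
      ((hasDerivAt_pow 7 x).const_mul ((c1*c5 + c2*c4 + c3*c3 + c4*c2 + c5*c1)/7))).add
      ((hasDerivAt_pow 8 x).const_mul ((c2*c5 + c3*c4 + c4*c3 + c5*c2)/8))).add
      ((hasDerivAt_pow 9 x).const_mul ((c3*c5 + c4*c4 + c5*c3)/9))).add
      ((hasDerivAt_pow 10 x).const_mul ((c4*c5 + c5*c4)/10))).add
      ((hasDerivAt_pow 11 x).const_mul ((c5*c5)/11)))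
    refine h.congr_deriv ?_
    push_cast
    ring
  rw [intervalIntegral.integral_eq_sub_of_hasDerivAt (fun x _ => hF x)
    ((Continuous.intervalIntegrable (by fun_prop) _ _))]
  norm_num
  ring


/-- The Jiang–Shu smoothness indicator of any degree-6 polynomial written in the shifted
Legendre basis is a sum of perfect squares. -/
theorem smoothness_indicator_r7 (upt ux ux2 ux3 ux4 ux5 ux6 : ℝ) :
    beta (C upt + C ux * L1 + C ux2 * L2 + C ux3 * L3 + C ux4 * L4
        + C ux5 * L5 + C ux6 * L6) =
      (ux + ux3 / 10 + ux5 / 126) ^ 2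
        + (13 / 3) * (ux2 + (123 / 455) * ux4 + (85 / 2002) * ux6) ^ 2
        + (781 / 20) * (ux3 + (26045 / 49203) * ux5) ^ 2
        + (1421461 / 2275) * (ux4 + (81596225 / 93816426) * ux6) ^ 2
        + (21520059541 / 1377684) * ux5 ^ 2
        + (15510384942580921 / 27582029244) * ux6 ^ 2 := by
  set P : ℝ[X] := C upt + C ux * L1 + C ux2 * L2 + C ux3 * L3 + C ux4 * L4
      + C ux5 * L5 + C ux6 * L6 with hPdef
  have hP : P = (C upt - C ((1:ℝ)/12) * C ux2 + C ((3:ℝ)/560) * C ux4 - C ((5:ℝ)/14784) * C ux6)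
      + (C ux - C ((3:ℝ)/20) * C ux3 + C ((5:ℝ)/336) * C ux5) * X
      + (C ux2 - C ((3:ℝ)/14) * C ux4 + C ((5:ℝ)/176) * C ux6) * X^2
      + (C ux3 - C ((5:ℝ)/18) * C ux5) * X^3
      + (C ux4 - C ((15:ℝ)/44) * C ux6) * X^4
      + C ux5 * X^5 + C ux6 * X^6 := by
    simp only [hPdef, L1, L2, L3, L4, L5, L6]
    ring
  have hdeg : P.natDegree ≤ 6 := by rw [hP]; compute_degree
  have hsum : beta P = ∑ l ∈ Finset.Icc 1 6,
      ∫ x in (-(1 : ℝ) / 2)..(1 / 2), ((derivative^[l] P).eval x) ^ 2 := by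
    unfold beta
    apply Finset.sum_subset
    · intro l hl
      simp only [Finset.mem_Icc] at hl ⊢
      exact ⟨hl.1, hl.2.trans hdeg⟩
    · intro l hl hnl
      simp only [Finset.mem_Icc] at hl hnl
      have hlt : P.natDegree < l := by
        by_contra h
        exact hnl ⟨hl.1, not_lt.mp h⟩
      rw [Polynomial.iterate_derivative_eq_zero hlt]
      simp
  rw [hsum]
  rw [show Finset.Icc 1 6 = ({1, 2, 3, 4, 5, 6} : Finset ℕ) by rfl]
  rw [Finset.sum_insert (by decide), Finset.sum_insert (by decide),
    Finset.sum_insert (by decide), Finset.sum_insert (by decide),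
    Finset.sum_insert (by decide), Finset.sum_singleton]
  have he1 : ∀ x : ℝ, ((derivative^[1] P).eval x) ^ 2 =
      ((ux - 3/20*ux3 + 5/336*ux5) + (2*(ux2 - 3/14*ux4 + 5/176*ux6))*x
        + (3*(ux3 - 5/18*ux5))*x^2 + (4*(ux4 - 15/44*ux6))*x^3 + (5*ux5)*x^4
        + (6*ux6)*x^5)^2 := by
    intro x; rw [hP]; simp [Function.iterate_one]; ring
  have he2 : ∀ x : ℝ, ((derivative^[2] P).eval x) ^ 2 =
      ((2*(ux2 - 3/14*ux4 + 5/176*ux6)) + (6*(ux3 - 5/18*ux5))*x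
        + (12*(ux4 - 15/44*ux6))*x^2 + (20*ux5)*x^3 + (30*ux6)*x^4
        + (0:ℝ)*x^5)^2 := by
    intro x; rw [hP]
    simp [Function.iterate_succ_apply', Function.iterate_one]; ring
  have he3 : ∀ x : ℝ, ((derivative^[3] P).eval x) ^ 2 =
      ((6*(ux3 - 5/18*ux5)) + (24*(ux4 - 15/44*ux6))*x + (60*ux5)*x^2
        + (120*ux6)*x^3 + (0:ℝ)*x^4 + (0:ℝ)*x^5)^2 := by
    intro x; rw [hP]
    simp [Function.iterate_succ_apply', Function.iterate_one]; ring
  have he4 : ∀ x : ℝ, ((derivative^[4] P).eval x) ^ 2 =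
      ((24*(ux4 - 15/44*ux6)) + (120*ux5)*x + (360*ux6)*x^2 + (0:ℝ)*x^3
        + (0:ℝ)*x^4 + (0:ℝ)*x^5)^2 := by
    intro x; rw [hP]
    simp [Function.iterate_succ_apply', Function.iterate_one]; ring
  have he5 : ∀ x : ℝ, ((derivative^[5] P).eval x) ^ 2 =
      ((120*ux5) + (720*ux6)*x + (0:ℝ)*x^2 + (0:ℝ)*x^3 + (0:ℝ)*x^4
        + (0:ℝ)*x^5)^2 := by
    intro x; rw [hP]
    simp [Function.iterate_succ_apply', Function.iterate_one]; ring
  have he6 : ∀ x : ℝ, ((derivative^[6] P).eval x) ^ 2 =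
      ((720*ux6) + (0:ℝ)*x + (0:ℝ)*x^2 + (0:ℝ)*x^3 + (0:ℝ)*x^4
        + (0:ℝ)*x^5)^2 := by
    intro x; rw [hP]
    simp [Function.iterate_succ_apply', Function.iterate_one]; ring
  simp only [he1, he2, he3, he4, he5, he6]
  rw [master, master, master, master, master, master]
  ring
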